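/- Let G = (X, E, δ, X₀) be an NFA with observable events E_o, secret states X_S, observer G_obs, secret-involved projected automaton G_SP, and verifier G_v constructed from G_obs and G_SP. Then G is infinite-step strong opaque if and only if every verifier state x_v = (x_v¹, x_v²) ∈ X_v satisfies x_v² ≠ ∅. -/

import Mathlib

namespace Opacity

variable {X E : Type*}

/-- Extension of a nondeterministic transition function `δ : X × E → Set X`
to strings: `dStr δ x ε = {x}` and `dStr δ x (e·s) = ⋃ x' ∈ δ x e, dStr δ x' s`. -/
def dStr (δ : X → E → Set X) : X → List E → Set X
  | x, [] => {x}
  | x, e :: s => ⋃ x' ∈ δ x e, dStr δ x' s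

/-- Extension of the transition function to sets of states. -/
def dSet (δ : X → E → Set X) (Q : Set X) (s : List E) : Set X :=
  ⋃ x ∈ Q, dStr δ x s

/-- The natural projection `P : E* → E_o*`, deleting all unobservable events. -/
noncomputable def proj (Eo : Set E) : List E → List E
  | [] => []
  | e :: s => @ite _ (e ∈ Eo) (Classical.propDecidable _) (e :: proj Eo s) (proj Eo s)

/-- Unobservable reach `UR(Q)`. -/
def UR (δ : X → E → Set X) (Eo : Set E) (Q : Set X) : Set X :=
  {x' | ∃ x ∈ Q, ∃ s : List E, x' ∈ dStr δ x s ∧ proj Eo s = []}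

/-- Observable reach `R(Q, e_o)` via one observable event. -/
def oR (δ : X → E → Set X) (Eo : Set E) (Q : Set X) (eo : E) : Set X :=
  {x | ∃ x' ∈ Q, ∃ s : List E, x ∈ dStr δ x' s ∧ proj Eo s = [eo]}

/-- The observer's transition function `f_obs(q, e_o) = R(q, e_o)`, extended to
observation sequences.  It is totalized: since `R(∅, e_o) = ∅`, the partial
function `f_obs` is defined on `(q, w)` exactly when `fobs δ Eo q w` is nonempty. -/
def fobs (δ : X → E → Set X) (Eo : Set E) : Set X → List E → Set X
  | q, [] => q
  | q, e :: w => fobs δ Eo (oR δ Eo q e) w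

/-- The state set `X_obs` of the observer: the (nonempty) subsets of `X`
reachable from the initial observer state `UR(X₀)`. -/
def Xobs (δ : X → E → Set X) (Eo : Set E) (X0 : Set X) : Set (Set X) :=
  {q | ∃ w : List E, fobs δ Eo (UR δ Eo X0) w = q ∧ q.Nonempty}

/-- `y` is a run of the automaton from `x` over the string `s`:
`y 0 = x` and `y (j+1) ∈ δ (y j) (s[j])` for all `j < |s|`. -/
def IsRun (δ : X → E → Set X) (x : X) (s : List E) (y : ℕ → X) : Prop :=
  y 0 = x ∧ ∀ j : Fin s.length, y (j.val + 1) ∈ δ (y j.val) (s.get j)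

/-- There is a non-secret run of the automaton from `x` to `x'` over `s`
(all states of the run except possibly the first one are non-secret). -/
def NonSecretRunTo (δ : X → E → Set X) (XS : Set X) (x : X) (s : List E) (x' : X) : Prop :=
  ∃ y : ℕ → X, IsRun δ x s y ∧ (∀ j, 1 ≤ j → j ≤ s.length → y j ∉ XS) ∧ y s.length = x'

/-- `K`-step weak opacity. -/
def KStepWeakOpaque (δ : X → E → Set X) (Eo : Set E) (X0 XS : Set X) (K : ℕ) : Prop :=
  ∀ x0 ∈ X0, ∀ s t : List E,
    (dStr δ x0 (s ++ t)).Nonempty →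
    (dStr δ x0 s ∩ XS).Nonempty →
    (dSet δ (dStr δ x0 s ∩ XS) t).Nonempty →
    (proj Eo t).length ≤ K →
    ∃ x0' ∈ X0, ∃ s' t' : List E,
      (dStr δ x0' (s' ++ t')).Nonempty ∧
      proj Eo s' = proj Eo s ∧ proj Eo t' = proj Eo t ∧
      (dStr δ x0' s' ∩ XSᶜ).Nonempty ∧
      (dSet δ (dStr δ x0' s' ∩ XSᶜ) t').Nonempty

/-- Infinite-step weak opacity. -/
def InfStepWeakOpaque (δ : X → E → Set X) (Eo : Set E) (X0 XS : Set X) : Prop :=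
  ∀ x0 ∈ X0, ∀ s t : List E,
    (dStr δ x0 (s ++ t)).Nonempty →
    (dStr δ x0 s ∩ XS).Nonempty →
    (dSet δ (dStr δ x0 s ∩ XS) t).Nonempty →
    ∃ x0' ∈ X0, ∃ s' t' : List E,
      (dStr δ x0' (s' ++ t')).Nonempty ∧
      proj Eo s' = proj Eo s ∧ proj Eo t' = proj Eo t ∧
      (dStr δ x0' s' ∩ XSᶜ).Nonempty ∧
      (dSet δ (dStr δ x0' s' ∩ XSᶜ) t').Nonempty

/-- `K`-step strong opacity. -/
def KStepStrongOpaque (δ : X → E → Set X) (Eo : Set E) (X0 XS : Set X) (K : ℕ) : Prop :=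
  ∀ x0 ∈ X0, ∀ s t : List E,
    (dStr δ x0 (s ++ t)).Nonempty →
    (dStr δ x0 s ∩ XS).Nonempty →
    (dSet δ (dStr δ x0 s ∩ XS) t).Nonempty →
    (proj Eo t).length ≤ K →
    ∃ x0' ∈ X0, ∃ ω : List E,
      (dStr δ x0' ω).Nonempty ∧
      proj Eo ω = proj Eo (s ++ t) ∧
      ∃ y : ℕ → X, IsRun δ x0' ω y ∧
        ∀ j ≤ ω.length,
          (proj Eo ω).length - (proj Eo (ω.take j)).length ≤ K → y j ∉ XS

/-- Infinite-step strong opacity. -/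
def InfStepStrongOpaque (δ : X → E → Set X) (Eo : Set E) (X0 XS : Set X) : Prop :=
  ∀ x0 ∈ X0, ∀ s t : List E,
    (dStr δ x0 (s ++ t)).Nonempty →
    (dStr δ x0 s ∩ XS).Nonempty →
    (dSet δ (dStr δ x0 s ∩ XS) t).Nonempty →
    ∃ x0' ∈ X0 ∩ XSᶜ, ∃ ω : List E,
      (dStr δ x0' ω).Nonempty ∧
      proj Eo ω = proj Eo (s ++ t) ∧
      ∃ y : ℕ → X, IsRun δ x0' ω y ∧ ∀ j ≤ ω.length, y j ∉ XS

/-- Child of a node `(x₁, x₂)` of a state-tree associated with observer state `q'`,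
via observable event `e`. -/
def treeChild (δ : X → E → Set X) (Eo : Set E) (q' : Set X) (n : Set X × Set X)
    (e : E) : Set X × Set X :=
  ({x ∈ oR δ Eo q' e | ∃ x' ∈ n.1, x ∈ oR δ Eo {x'} e},
   {x ∈ oR δ Eo q' e | ∃ x' ∈ n.2, x ∈ oR δ Eo {x'} e})

/-- Descend in a state-tree from node `n` (associated with observer state `q'`)
along the observation sequence `w`. -/
def treeNodeAux (δ : X → E → Set X) (Eo : Set E) :
    Set X → Set X × Set X → List E → Set X × Set X
  | _, n, [] => n
  | q', n, e :: w => treeNodeAux δ Eo (oR δ Eo q' e) (treeChild δ Eo q' n e) w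

/-- The node of the state-tree rooted at observer state `q` reached from the
root `(q ∩ X_S, q ∩ X_NS)` along the observation sequence `w`. -/
def treeNode (δ : X → E → Set X) (Eo : Set E) (XS : Set X) (q : Set X)
    (w : List E) : Set X × Set X :=
  treeNodeAux δ Eo q (q ∩ XS, q ∩ XSᶜ) w

/-- `X_st`: all nodes of the depth-`K` state-trees rooted at observer states
intersecting the secret states. -/
def Xst (δ : X → E → Set X) (Eo : Set E) (X0 XS : Set X) (K : ℕ) :
    Set (Set X × Set X) :=
  {n | ∃ q ∈ Xobs δ Eo X0, (q ∩ XS).Nonempty ∧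
    ∃ w : List E, w.length ≤ K ∧ (fobs δ Eo q w).Nonempty ∧ treeNode δ Eo XS q w = n}

/-- Initial states of the secret-involved projected automaton.  A state of
`G_SP` is a pair `(x, b)` where `b = false` encodes the tag `N` and `b = true`
encodes the tag `Y`. -/
def SPinit (δ : X → E → Set X) (Eo : Set E) (X0 XS : Set X) : Set (X × Bool) :=
  {p | p.1 ∈ UR δ Eo X0 ∧
    (p.2 = false ↔
      ∃ x0 ∈ X0 ∩ XSᶜ, ∃ s : List E, proj Eo s = [] ∧ NonSecretRunTo δ XS x0 s p.1)}

/-- Transition relation of the secret-involved projected automaton. -/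
def SPtrans (δ : X → E → Set X) (Eo : Set E) (XS : Set X) (p : X × Bool) (e : E) :
    Set (X × Bool) :=
  {p' | p'.1 ∈ oR δ Eo {p.1} e ∧
    ((p.1 ∉ XS ∧
        (p'.2 = false ↔ ∃ s : List E, proj Eo s = [e] ∧ NonSecretRunTo δ XS p.1 s p'.1)) ∨
     (p.1 ∈ XS ∧ p.2 = true ∧ p'.2 = true))}

/-- `X_SP`: states of the secret-involved projected automaton reachable from
its initial states. -/
def XSP (δ : X → E → Set X) (Eo : Set E) (X0 XS : Set X) : Set (X × Bool) :=
  {p | ∃ p0 ∈ SPinit δ Eo X0 XS, ∃ w : List E, p ∈ dStr (SPtrans δ Eo XS) p0 w}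

/-- Child of a node `(x₁, x₂)` of a secret-unvisited state-tree associated with
observer state `q'`, via observable event `e`. -/
def sstChild (δ : X → E → Set X) (Eo : Set E) (XS : Set X) (q' : Set X)
    (n : Set X × Set X) (e : E) : Set X × Set X :=
  (oR δ Eo q' e,
   {x ∈ oR δ Eo q' e | ∃ x' ∈ n.2,
      x ∈ oR δ Eo {x'} e ∧ (x, false) ∈ SPtrans δ Eo XS (x', false) e})

/-- Descend in a secret-unvisited state-tree from node `n` (associated with
observer state `q'`) along the observation sequence `w`. -/
def sstNodeAux (δ : X → E → Set X) (Eo : Set E) (XS : Set X) :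
    Set X → Set X × Set X → List E → Set X × Set X
  | _, n, [] => n
  | q', n, e :: w => sstNodeAux δ Eo XS (oR δ Eo q' e) (sstChild δ Eo XS q' n e) w

/-- The node of the secret-unvisited state-tree (SST) rooted at observer state
`q` reached from the root `(q, {x ∈ q ∩ X_NS : x_N ∈ X_SP})` along the
observation sequence `w`. -/
def sstNode (δ : X → E → Set X) (Eo : Set E) (X0 XS : Set X) (q : Set X)
    (w : List E) : Set X × Set X :=
  sstNodeAux δ Eo XS q
    (q, {x | x ∈ q ∧ x ∉ XS ∧ (x, false) ∈ XSP δ Eo X0 XS}) w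

/-- `X_st^G`: all nodes of the depth-`K` SSTs rooted at observer states
intersecting the secret states. -/
def XstSST (δ : X → E → Set X) (Eo : Set E) (X0 XS : Set X) (K : ℕ) :
    Set (Set X × Set X) :=
  {n | ∃ q ∈ Xobs δ Eo X0, (q ∩ XS).Nonempty ∧
    ∃ w : List E, w.length ≤ K ∧ (fobs δ Eo q w).Nonempty ∧ sstNode δ Eo X0 XS q w = n}

/-- Initial state of the verifier. -/
def vInit (δ : X → E → Set X) (Eo : Set E) (X0 XS : Set X) : Set X × Set X :=
  (UR δ Eo X0, {x ∈ UR δ Eo X0 | (x, false) ∈ SPinit δ Eo X0 XS})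

/-- Transition function of the verifier, extended to observation sequences
(totalized: the verifier step is defined exactly when the corresponding
observer step is, i.e. exactly when the first component stays nonempty). -/
def fv (δ : X → E → Set X) (Eo : Set E) (XS : Set X) :
    Set X × Set X → List E → Set X × Set X
  | v, [] => v
  | v, e :: w => fv δ Eo XS
      (oR δ Eo v.1 e,
       {x' ∈ oR δ Eo v.1 e | ∃ x ∈ v.2, (x', false) ∈ SPtrans δ Eo XS (x, false) e}) w

/-- `X_v`: the verifier states reachable from the initial verifier state. -/
def Xv (δ : X → E → Set X) (Eo : Set E) (X0 XS : Set X) : Set (Set X × Set X) :=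
  {v | ∃ w : List E, fv δ Eo XS (vInit δ Eo X0 XS) w = v ∧ v.1.Nonempty}

end Opacity

open Opacity
section Aux

open Opacity

variable {X E : Type*} {δ : X → E → Set X} {Eo : Set E} {X0 XS : Set X}

lemma proj_append (Eo : Set E) (s t : List E) :
    proj Eo (s ++ t) = proj Eo s ++ proj Eo t := by
  induction s with
  | nil => rfl
  | cons e s ih =>
    simp only [List.cons_append, proj]
    split <;> simp [ih]

lemma proj_split {ω a b : List E} (h : proj Eo ω = a ++ b) :
    ∃ s t : List E, ω = s ++ t ∧ proj Eo s = a ∧ proj Eo t = b := by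
  induction ω generalizing a with
  | nil =>
    obtain ⟨rfl, rfl⟩ := List.append_eq_nil_iff.mp ((show proj Eo [] = [] from rfl) ▸ h).symm
    exact ⟨[], [], rfl, rfl, rfl⟩
  | cons e ω ih =>
    by_cases he : e ∈ Eo
    · rw [show proj Eo (e :: ω) = e :: proj Eo ω from by simp [proj, he]] at h
      cases a with
      | nil => exact ⟨[], e :: ω, rfl, rfl, by simpa [proj, he] using h⟩
      | cons a0 a' =>
        rw [List.cons_append, List.cons.injEq] at h
        obtain ⟨rfl, h2⟩ := h
        obtain ⟨s, t, rfl, hs, ht⟩ := ih h2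
        exact ⟨e :: s, t, rfl, by simp [proj, he, hs], ht⟩
    · rw [show proj Eo (e :: ω) = proj Eo ω from by simp [proj, he]] at h
      obtain ⟨s, t, rfl, hs, ht⟩ := ih h
      exact ⟨e :: s, t, rfl, by simp [proj, he, hs], ht⟩

lemma mem_dStr_append {x x' : X} {s t : List E} :
    x' ∈ dStr δ x (s ++ t) ↔ ∃ m, m ∈ dStr δ x s ∧ x' ∈ dStr δ m t := by
  induction s generalizing x with
  | nil => simp [dStr]
  | cons e s ih =>
    simp only [List.cons_append, dStr, Set.mem_iUnion, exists_prop]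
    constructor
    · rintro ⟨m1, hm1, h⟩
      obtain ⟨m, hm, h'⟩ := ih.mp h
      exact ⟨m, ⟨m1, hm1, hm⟩, h'⟩
    · rintro ⟨m, ⟨m1, hm1, hm⟩, h'⟩
      exact ⟨m1, hm1, ih.mpr ⟨m, hm, h'⟩⟩

/-- shift a run along a cons -/
lemma nsrt_cons {x m x' : X} {e : E} {u : List E}
    (hm : m ∈ δ x e) (hmns : m ∉ XS) (h : NonSecretRunTo δ XS m u x') :
    NonSecretRunTo δ XS x (e :: u) x' := by
  obtain ⟨z, ⟨hz0, hzstep⟩, hzns, hzend⟩ := h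
  refine ⟨fun j => match j with | 0 => x | k + 1 => z k, ⟨rfl, ?_⟩, ?_, ?_⟩
  · rintro ⟨j, hj⟩
    match j with
    | 0 => simpa [hz0] using hm
    | k + 1 =>
      have hk : k < u.length := by simpa using hj
      exact hzstep ⟨k, hk⟩
  · intro j h1 h2
    match j with
    | 0 => omega
    | k + 1 =>
      show z k ∉ XS
      rcases Nat.eq_zero_or_pos k with rfl | hk
      · rw [hz0]; exact hmns
      · exact hzns k hk (by simp only [List.length_cons] at h2; omega)
  · simpa using hzend

lemma nsrt_cons_dest {x x' : X} {e : E} {u : List E}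
    (h : NonSecretRunTo δ XS x (e :: u) x') :
    ∃ m, m ∈ δ x e ∧ m ∉ XS ∧ NonSecretRunTo δ XS m u x' := by
  obtain ⟨y, ⟨hy0, hystep⟩, hyns, hyend⟩ := h
  refine ⟨y 1, ?_, hyns 1 le_rfl (by simp), fun k => y (k + 1), ⟨rfl, ?_⟩, ?_, ?_⟩
  · have := hystep ⟨0, by simp⟩
    simpa [hy0] using this
  · rintro ⟨k, hk⟩
    have := hystep ⟨k + 1, by simpa using hk⟩
    simpa using this
  · intro j h1 h2
    exact hyns (j + 1) (by omega) (by simpa using h2)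
  · simpa using hyend

lemma nsrt_nil {x x' : X} : NonSecretRunTo δ XS x ([] : List E) x' ↔ x' = x := by
  constructor
  · rintro ⟨y, ⟨hy0, _⟩, _, hend⟩
    simp only [List.length_nil] at hend
    rw [← hend, hy0]
  · intro h
    subst h
    exact ⟨fun _ => x', ⟨rfl, fun j => absurd j.isLt (by simp)⟩,
      fun j h1 h2 => absurd (h1.trans h2) (by simp), rfl⟩

lemma nsrt_append {x m x' : X} {s t : List E}
    (h1 : NonSecretRunTo δ XS x s m) (h2 : NonSecretRunTo δ XS m t x') :
    NonSecretRunTo δ XS x (s ++ t) x' := by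
  induction s generalizing x with
  | nil => rw [nsrt_nil] at h1; rwa [h1] at h2
  | cons e s ih =>
    obtain ⟨m1, hm1, hns, h1'⟩ := nsrt_cons_dest h1
    exact nsrt_cons hm1 hns (ih h1')

lemma nsrt_split {x x' : X} {s t : List E}
    (h : NonSecretRunTo δ XS x (s ++ t) x') :
    ∃ m, NonSecretRunTo δ XS x s m ∧ NonSecretRunTo δ XS m t x' := by
  induction s generalizing x with
  | nil => exact ⟨x, nsrt_nil.mpr rfl, h⟩
  | cons e s ih =>
    obtain ⟨m1, hm1, hns, h'⟩ := nsrt_cons_dest h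
    obtain ⟨m, hm, h2⟩ := ih h'
    exact ⟨m, nsrt_cons hm1 hns hm, h2⟩

lemma nsrt_last_not_secret {x0 x : X} {ω : List E} (hx0 : x0 ∉ XS)
    (h : NonSecretRunTo δ XS x0 ω x) : x ∉ XS := by
  obtain ⟨y, ⟨hy0, _⟩, hyns, hyend⟩ := h
  rcases Nat.eq_zero_or_pos ω.length with h0 | h0
  · rw [← hyend, h0, hy0]; exact hx0
  · rw [← hyend]; exact hyns _ h0 le_rfl

lemma mem_dStr_iff_runTo {x x' : X} {ω : List E} :
    x' ∈ dStr δ x ω ↔ ∃ y : ℕ → X, IsRun δ x ω y ∧ y ω.length = x' := by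
  induction ω generalizing x with
  | nil =>
    simp only [dStr, Set.mem_singleton_iff, List.length_nil]
    constructor
    · intro h
      subst h
      exact ⟨fun _ => x', ⟨rfl, fun j => absurd j.isLt (by simp)⟩, rfl⟩
    · rintro ⟨y, ⟨hy0, _⟩, hend⟩; rw [← hend, hy0]
  | cons e s ih =>
    simp only [dStr, Set.mem_iUnion, exists_prop]
    constructor
    · rintro ⟨m, hm, h⟩
      obtain ⟨z, ⟨hz0, hzstep⟩, hzend⟩ := ih.mp h
      refine ⟨fun j => match j with | 0 => x | k + 1 => z k, ⟨rfl, ?_⟩, by simpa using hzend⟩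
      rintro ⟨j, hj⟩
      match j with
      | 0 => simpa [hz0] using hm
      | k + 1 =>
        have hk : k < s.length := by simpa using hj
        exact hzstep ⟨k, hk⟩
    · rintro ⟨y, ⟨hy0, hystep⟩, hend⟩
      refine ⟨y 1, by simpa [hy0] using hystep ⟨0, by simp⟩, ?_⟩
      refine ih.mpr ⟨fun k => y (k + 1), ⟨rfl, ?_⟩, by simpa using hend⟩
      rintro ⟨k, hk⟩
      simpa using hystep ⟨k + 1, by simpa using hk⟩

lemma nsrt_mem_dStr {x x' : X} {ω : List E} (h : NonSecretRunTo δ XS x ω x') :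
    x' ∈ dStr δ x ω := by
  obtain ⟨y, hy, _, hend⟩ := h
  exact mem_dStr_iff_runTo.mpr ⟨y, hy, hend⟩

/-- States reachable over a given observation. -/
def Reach (δ : X → E → Set X) (Eo : Set E) (X0 : Set X) (w : List E) : Set X :=
  {x' | ∃ x0 ∈ X0, ∃ ω : List E, proj Eo ω = w ∧ x' ∈ dStr δ x0 ω}

/-- States reachable via entirely non-secret runs over a given observation. -/
def NSre (δ : X → E → Set X) (Eo : Set E) (X0 XS : Set X) (w : List E) : Set X :=
  {x' | ∃ x0 ∈ X0 ∩ XSᶜ, ∃ ω : List E, proj Eo ω = w ∧ NonSecretRunTo δ XS x0 ω x'}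

lemma NSre_subset_Reach (w : List E) : NSre δ Eo X0 XS w ⊆ Reach δ Eo X0 w := by
  rintro x ⟨x0, hx0, ω, hω, h⟩
  exact ⟨x0, hx0.1, ω, hω, nsrt_mem_dStr h⟩

lemma NSre_not_secret {w : List E} {x : X} (h : x ∈ NSre δ Eo X0 XS w) : x ∉ XS := by
  obtain ⟨x0, hx0, ω, hω, h⟩ := h
  exact nsrt_last_not_secret hx0.2 h

lemma oR_Reach (w : List E) (e : E) :
    oR δ Eo (Reach δ Eo X0 w) e = Reach δ Eo X0 (w ++ [e]) := by
  ext x'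
  constructor
  · rintro ⟨x, ⟨x0, hx0, ω, hω, hx⟩, s, hs, hps⟩
    exact ⟨x0, hx0, ω ++ s, by rw [proj_append, hω, hps],
      mem_dStr_append.mpr ⟨x, hx, hs⟩⟩
  · rintro ⟨x0, hx0, ω, hω, hx'⟩
    obtain ⟨s, t, rfl, hs, ht⟩ := proj_split hω
    obtain ⟨m, hm, hm'⟩ := mem_dStr_append.mp hx'
    exact ⟨m, ⟨x0, hx0, s, hs, hm⟩, t, hm', ht⟩

lemma step_NSre (w : List E) (e : E) :
    {x' ∈ oR δ Eo (Reach δ Eo X0 w) e |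
      ∃ x ∈ NSre δ Eo X0 XS w, (x', false) ∈ SPtrans δ Eo XS (x, false) e} =
    NSre δ Eo X0 XS (w ++ [e]) := by
  ext x'
  simp only [Set.mem_setOf_eq]
  constructor
  · rintro ⟨-, x, hx, htr⟩
    obtain ⟨x0, hx0, ω, hω, hrun⟩ := hx
    simp only [SPtrans, Set.mem_setOf_eq] at htr
    rcases htr.2 with ⟨-, hiff⟩ | ⟨-, -, hfalse⟩
    · obtain ⟨s, hps, hns⟩ := hiff.mp (by simp)
      exact ⟨x0, hx0, ω ++ s, by rw [proj_append, hω, hps], nsrt_append hrun hns⟩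
    · exact absurd hfalse (by simp)
  · rintro ⟨x0, hx0, ω, hω, hrun⟩
    obtain ⟨s, t, rfl, hs, ht⟩ := proj_split hω
    obtain ⟨m, hm, hm'⟩ := nsrt_split hrun
    have hmNS : m ∈ NSre δ Eo X0 XS w := ⟨x0, hx0, s, hs, hm⟩
    have hmns : m ∉ XS := NSre_not_secret hmNS
    refine ⟨⟨m, NSre_subset_Reach w hmNS, t, nsrt_mem_dStr hm', ht⟩, m, hmNS, ?_⟩
    refine ⟨⟨m, rfl, t, nsrt_mem_dStr hm', ht⟩, Or.inl ⟨hmns, ?_⟩⟩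
    exact ⟨fun _ => ⟨t, ht, hm'⟩, fun _ => by simp⟩

lemma fv_char (w u : List E) :
    fv δ Eo XS (Reach δ Eo X0 u, NSre δ Eo X0 XS u) w =
      (Reach δ Eo X0 (u ++ w), NSre δ Eo X0 XS (u ++ w)) := by
  induction w generalizing u with
  | nil => simp [fv]
  | cons e w ih =>
    simp only [fv]
    rw [step_NSre, oR_Reach, ih (u ++ [e])]
    simp

lemma vInit_eq :
    vInit δ Eo X0 XS = (Reach δ Eo X0 [], NSre δ Eo X0 XS []) := by
  have hR : UR δ Eo X0 = Reach δ Eo X0 [] := by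
    ext x; simp only [UR, Reach, Set.mem_setOf_eq]
    exact ⟨fun ⟨a, ha, s, h1, h2⟩ => ⟨a, ha, s, h2, h1⟩, fun ⟨a, ha, s, h1, h2⟩ => ⟨a, ha, s, h2, h1⟩⟩
  refine Prod.ext hR ?_
  show {x ∈ UR δ Eo X0 | (x, false) ∈ SPinit δ Eo X0 XS} = _
  ext x
  simp only [Set.mem_setOf_eq, SPinit]
  constructor
  · rintro ⟨-, -, hiff⟩
    obtain ⟨x0, hx0, s, hps, hns⟩ := hiff.mp (by simp)
    exact ⟨x0, hx0, s, hps, hns⟩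
  · rintro ⟨x0, hx0, s, hps, hns⟩
    have hur : x ∈ UR δ Eo X0 := ⟨x0, hx0.1, s, nsrt_mem_dStr hns, hps⟩
    exact ⟨hur, hur, ⟨fun _ => ⟨x0, hx0, s, hps, hns⟩, fun _ => by simp⟩⟩

lemma fv_vInit (w : List E) :
    fv δ Eo XS (vInit δ Eo X0 XS) w = (Reach δ Eo X0 w, NSre δ Eo X0 XS w) := by
  rw [vInit_eq]
  simpa using fv_char (δ := δ) (Eo := Eo) (X0 := X0) (XS := XS) w []

lemma run_take {x0 : X} {ω : List E} {y : ℕ → X} (h : IsRun δ x0 ω y) (j : ℕ)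
    (hj : j ≤ ω.length) : IsRun δ x0 (ω.take j) y := by
  refine ⟨h.1, ?_⟩
  rintro ⟨k, hk⟩
  have hk' : k < ω.length := lt_of_lt_of_le hk (by simp)
  have := h.2 ⟨k, hk'⟩
  simpa [List.getElem_take] using this

lemma run_drop {x0 : X} {ω : List E} {y : ℕ → X} (h : IsRun δ x0 ω y) (j : ℕ)
    (hj : j ≤ ω.length) : IsRun δ (y j) (ω.drop j) (fun k => y (j + k)) := by
  refine ⟨rfl, ?_⟩
  rintro ⟨k, hk⟩
  have hk' : j + k < ω.length := by simp at hk; omega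
  have := h.2 ⟨j + k, hk'⟩
  simpa [List.getElem_drop, Nat.add_assoc] using this

end Aux

/-- An NFA `G` is infinite-step strong opaque if and only if every
reachable verifier state `x_v = (x_v¹, x_v²)` satisfies `x_v² ≠ ∅`. -/
theorem infStepStrongOpaque_iff_verifier_states_nonempty
    {X E : Type*} [Finite X] [Finite E]
    (δ : X → E → Set X) (Eo : Set E) (X0 XS : Set X) :
    InfStepStrongOpaque δ Eo X0 XS ↔
      ∀ v ∈ Xv δ Eo X0 XS, v.2 ≠ ∅ := by
  constructor
  · intro hOp v hv
    obtain ⟨w, hw, hne⟩ := hv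
    rw [fv_vInit] at hw
    rw [← hw] at hne ⊢
    simp only at hne ⊢
    rw [← Set.nonempty_iff_ne_empty]
    obtain ⟨x', x0, hx0, ω, hω, hx'⟩ := hne
    obtain ⟨y, hy, hyend⟩ := mem_dStr_iff_runTo.mp hx'
    by_cases hall : ∀ j ≤ ω.length, y j ∉ XS
    · have hx0ns : x0 ∉ XS := hy.1 ▸ hall 0 (Nat.zero_le _)
      exact ⟨x', x0, ⟨hx0, hx0ns⟩, ω, hω,
        ⟨y, hy, fun j _ h2 => hall j h2, hyend⟩⟩
    · push_neg at hall
      obtain ⟨j, hj, hsec⟩ := hall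
      set s := ω.take j with hs
      set t := ω.drop j with ht
      have hst : s ++ t = ω := List.take_append_drop j ω
      have hslen : s.length = j := by
        rw [hs, List.length_take]; omega
      have hyj : y j ∈ dStr δ x0 s :=
        mem_dStr_iff_runTo.mpr ⟨y, run_take hy j hj, by rw [hslen]⟩
      have hx't : x' ∈ dStr δ (y j) t := by
        refine mem_dStr_iff_runTo.mpr ⟨fun k => y (j + k), run_drop hy j hj, ?_⟩
        show y (j + t.length) = x'
        rw [ht, List.length_drop, Nat.add_sub_cancel' hj]
        exact hyend
      have h1 : (dStr δ x0 (s ++ t)).Nonempty := by rw [hst]; exact ⟨x', hx'⟩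
      have h2 : (dStr δ x0 s ∩ XS).Nonempty := ⟨y j, hyj, hsec⟩
      have h3 : (dSet δ (dStr δ x0 s ∩ XS) t).Nonempty := by
        refine ⟨x', ?_⟩
        simp only [dSet, Set.mem_iUnion, exists_prop]
        exact ⟨y j, ⟨hyj, hsec⟩, hx't⟩
      obtain ⟨x0', hx0', ω', hne', hpω', y', hy', hall'⟩ := hOp x0 hx0 s t h1 h2 h3
      rw [hst] at hpω'
      exact ⟨y' ω'.length, x0', hx0', ω', hpω'.trans hω,
        ⟨y', hy', fun k _ hk => hall' k hk, rfl⟩⟩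
  · intro hv x0 hx0 s t hst _ _
    obtain ⟨x'0, hx'0⟩ := hst
    have hvmem : (Reach δ Eo X0 (proj Eo (s ++ t)),
        NSre δ Eo X0 XS (proj Eo (s ++ t))) ∈ Xv δ Eo X0 XS :=
      ⟨proj Eo (s ++ t), fv_vInit _, ⟨x'0, x0, hx0, s ++ t, rfl, hx'0⟩⟩
    have h2 := hv _ hvmem
    simp only at h2
    rw [← Set.nonempty_iff_ne_empty] at h2
    obtain ⟨x'', x0', hx0', ω, hω, hrun⟩ := h2
    obtain ⟨y, hy, hyns, hyend⟩ := hrun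
    refine ⟨x0', hx0', ω, ⟨x'', nsrt_mem_dStr ⟨y, hy, hyns, hyend⟩⟩, hω, y, hy, ?_⟩
    intro j hj
    rcases Nat.eq_zero_or_pos j with rfl | hjpos
    · rw [hy.1]; exact hx0'.2
    · exact hyns j hjpos hj
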